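/- Let a ≥ 2 be an integer and let x ∈ {0, 1, …, l_a − 1}. Then the least element of S(a) congruent to x modulo l_a is β(x)·l_a + x; equivalently, the element of the Apéry set Ap(S(a), l_a) = {s ∈ S(a) : s − l_a ∉ S(a)} lying in the residue class of x modulo l_a is β(x)·l_a + x. -/

import Mathlib

/-- The Lucas sequence: l 0 = 2, l 1 = 1, l (n+2) = l (n+1) + l n. -/
def lucas : ℕ → ℕ
  | 0 => 2
  | 1 => 1
  | n + 2 => lucas (n + 1) + lucas n

/-- The modified (monotone) Lucas sequence: l̃ 0 = 1, l̃ 1 = 2, l̃ n = l n for n ≥ 2. -/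
def ltil : ℕ → ℕ
  | 0 => 1
  | 1 => 2
  | n + 2 => lucas (n + 2)

/-- β x : minimal number of summands in a representation of x as a sum of
modified Lucas numbers (with repetitions allowed). -/
noncomputable def beta (x : ℕ) : ℕ :=
  sInf {s : ℕ | ∃ k : ℕ, ∃ b : ℕ → ℕ,
    x = ∑ i ∈ Finset.range (k + 1), b i * ltil i ∧ s = ∑ i ∈ Finset.range (k + 1), b i}

/-- γ x : the greatest k with l̃ k ≤ x (for x ≥ 1). -/
noncomputable def gamma (x : ℕ) : ℕ := sSup {k : ℕ | ltil k ≤ x}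

/-- S a : the additive submonoid of ℕ generated by {l_a} ∪ {l_a + l_n : n ∈ ℕ}. -/
def Sset (a : ℕ) : AddSubmonoid ℕ :=
  AddSubmonoid.closure ({lucas a} ∪ {x : ℕ | ∃ n : ℕ, x = lucas a + lucas n})

/-- T a : the additive submonoid of ℕ generated by {l_a + l_n : n ∈ ℕ}. -/
def Tset (a : ℕ) : AddSubmonoid ℕ :=
  AddSubmonoid.closure {x : ℕ | ∃ n : ℕ, x = lucas a + lucas n}

set_option maxRecDepth 4000

lemma lucas_pos : ∀ n, 0 < lucas n := by
  intro n
  induction n using Nat.strong_induction_on with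
  | _ n ih =>
    match n with
    | 0 => decide
    | 1 => decide
    | n+2 =>
      have h := ih (n+1) (by omega)
      show 0 < lucas (n+1) + lucas n
      omega

lemma ltil_pos : ∀ n, 0 < ltil n := by
  intro n
  match n with
  | 0 => decide
  | 1 => decide
  | n+2 => exact lucas_pos (n+2)

lemma ltil_mono : StrictMono ltil := by
  apply strictMono_nat_of_lt_succ
  intro n
  match n with
  | 0 => decide
  | 1 => decide
  | n+2 =>
    show lucas (n+2) < lucas (n+3)
    have h1 := lucas_pos (n+1)
    show lucas (n+2) < lucas (n+2) + lucas (n+1)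
    omega

lemma ltil_rec (k : ℕ) (hk : 2 ≤ k) : ltil (k+2) = ltil (k+1) + ltil k := by
  obtain ⟨m, rfl⟩ := Nat.exists_eq_add_of_le hk
  have e : 2 + m = m + 2 := by omega
  rw [e]
  show lucas (m+4) = lucas (m+3) + lucas (m+2)
  show lucas (m+3) + lucas (m+2) = lucas (m+3) + lucas (m+2)
  rfl

lemma ltil_succ_sub : ∀ k, ∃ e, ltil (k+1) = ltil k + ltil e := by
  intro k
  match k with
  | 0 => exact ⟨0, by decide⟩
  | 1 => exact ⟨0, by decide⟩
  | 2 => exact ⟨0, by decide⟩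
  | k+3 => exact ⟨k+2, by rw [ltil_rec (k+2) (by omega)]⟩

lemma lucas_ltil : ∀ n, ∃ j, lucas n = ltil j := by
  intro n
  match n with
  | 0 => exact ⟨1, rfl⟩
  | 1 => exact ⟨0, rfl⟩
  | n+2 => exact ⟨n+2, rfl⟩

lemma ltil_lucas : ∀ j, ∃ n, ltil j = lucas n := by
  intro j
  match j with
  | 0 => exact ⟨1, rfl⟩
  | 1 => exact ⟨0, rfl⟩
  | j+2 => exact ⟨j+2, rfl⟩

lemma ltil_of_two_le (a : ℕ) (ha : 2 ≤ a) : ltil a = lucas a := by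
  obtain ⟨m, rfl⟩ := Nat.exists_eq_add_of_le ha
  have e : 2 + m = m + 2 := by omega
  rw [e]
  rfl

/-- representation predicate matching beta's set -/
def RepN (x s : ℕ) : Prop := ∃ k : ℕ, ∃ b : ℕ → ℕ,
    x = ∑ i ∈ Finset.range (k + 1), b i * ltil i ∧ s = ∑ i ∈ Finset.range (k + 1), b i

/-- list representation -/
def RepL (x s : ℕ) : Prop := ∃ L : List ℕ, (L.map ltil).sum = x ∧ L.length = s

lemma beta_def (x : ℕ) : beta x = sInf {s | RepN x s} := rfl

@[simp] lemma ltil_zero : ltil 0 = 1 := rfl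
@[simp] lemma ltil_one : ltil 1 = 2 := rfl

lemma count_sum_aux (K : ℕ) : ∀ L : List ℕ, (∀ j ∈ L, j ≤ K) →
    (∑ i ∈ Finset.range (K+1), L.count i * ltil i = (L.map ltil).sum ∧
     ∑ i ∈ Finset.range (K+1), L.count i = L.length) := by
  intro L
  induction L with
  | nil => intro _; simp
  | cons j L' ih =>
    intro hbd
    have hj : j ≤ K := hbd j (by simp)
    obtain ⟨ih1, ih2⟩ := ih (by intro i hi; exact hbd i (by simp [hi]))
    have hc : ∀ i, (j :: L').count i = L'.count i + (if i = j then 1 else 0) := by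
      intro i
      rw [List.count_cons]
      by_cases h : i = j
      · simp [h]
      · simp [beq_iff_eq, h, Ne.symm h]
    constructor
    · have step : ∑ i ∈ Finset.range (K+1), (j :: L').count i * ltil i
          = ∑ i ∈ Finset.range (K+1), (L'.count i * ltil i + (if i = j then ltil i else 0)) := by
        refine Finset.sum_congr rfl (fun i _ => ?_)
        rw [hc i]
        by_cases h : i = j <;> simp [h, Nat.add_mul]
      rw [step, Finset.sum_add_distrib, ih1, Finset.sum_ite_eq' (Finset.range (K+1)) j ltil]
      rw [if_pos (Finset.mem_range.mpr (by omega))]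
      simp only [List.map_cons, List.sum_cons]
      omega
    · have step : ∑ i ∈ Finset.range (K+1), (j :: L').count i
          = ∑ i ∈ Finset.range (K+1), (L'.count i + (if i = j then 1 else 0)) :=
        Finset.sum_congr rfl (fun i _ => hc i)
      rw [step, Finset.sum_add_distrib, ih2, Finset.sum_ite_eq' (Finset.range (K+1)) j (fun _ => 1)]
      rw [if_pos (Finset.mem_range.mpr (by omega))]
      simp

lemma repl_to_repn {x s : ℕ} (h : RepL x s) : RepN x s := by
  obtain ⟨L, hsum, hlen⟩ := h
  have hbd : ∀ j ∈ L, j ≤ L.sum := by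
    intro j hj
    exact List.single_le_sum (by intro y _; omega) j hj
  obtain ⟨h1, h2⟩ := count_sum_aux L.sum L hbd
  exact ⟨L.sum, fun i => L.count i, by rw [h1, hsum], by rw [h2, hlen]⟩

lemma repn_to_repl {x s : ℕ} (h : RepN x s) : RepL x s := by
  obtain ⟨k, b, hx, hs⟩ := h
  induction k generalizing x s with
  | zero =>
    refine ⟨List.replicate (b 0) 0, ?_, ?_⟩
    · simp only [List.map_replicate, List.sum_replicate, ltil_zero, smul_eq_mul, mul_one]
      simp at hx
      omega
    · simp at hs
      simp [hs]
  | succ k ih =>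
    rw [Finset.sum_range_succ] at hx hs
    obtain ⟨L', hL'sum, hL'len⟩ := ih rfl rfl
    refine ⟨L' ++ List.replicate (b (k+1)) (k+1), ?_, ?_⟩
    · simp only [List.map_append, List.sum_append, List.map_replicate,
        List.sum_replicate, smul_eq_mul, hL'sum]
      omega
    · simp [hL'len, hs]

lemma repl_self (x : ℕ) : RepL x x := by
  refine ⟨List.replicate x 0, ?_, by simp⟩
  simp only [List.map_replicate, List.sum_replicate, ltil_zero, smul_eq_mul, mul_one]

lemma beta_le {x s : ℕ} (h : RepL x s) : beta x ≤ s :=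
  Nat.sInf_le (repl_to_repn h)

lemma beta_mem (x : ℕ) : RepN x (beta x) := by
  have hne : {s | RepN x s}.Nonempty := ⟨x, repl_to_repn (repl_self x)⟩
  exact Nat.sInf_mem hne

lemma beta_repl (x : ℕ) : RepL x (beta x) := repn_to_repl (beta_mem x)

lemma beta_zero : beta 0 = 0 := Nat.le_zero.mp (beta_le ⟨[], by simp, rfl⟩)

lemma beta_add (x y : ℕ) : beta (x + y) ≤ beta x + beta y := by
  obtain ⟨Lx, hx1, hx2⟩ := beta_repl x
  obtain ⟨Ly, hy1, hy2⟩ := beta_repl y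
  exact beta_le ⟨Lx ++ Ly, by simp [hx1, hy1], by simp [hx2, hy2]⟩

lemma beta_coin (j : ℕ) : beta (ltil j) ≤ 1 := beta_le ⟨[j], by simp, rfl⟩

lemma beta_lucas (n : ℕ) : beta (lucas n) ≤ 1 := by
  obtain ⟨j, hj⟩ := lucas_ltil n
  rw [hj]; exact beta_coin j

lemma beta_pos {x : ℕ} (hx : x ≠ 0) : 1 ≤ beta x := by
  rcases Nat.eq_zero_or_pos (beta x) with h | h
  · obtain ⟨L, h1, h2⟩ := beta_repl x
    rw [h, List.length_eq_zero_iff] at h2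
    subst h2
    simp at h1
    omega
  · exact h

lemma beta_eq_one_coin {x : ℕ} (h : beta x = 1) : ∃ j, x = ltil j := by
  obtain ⟨L, h1, h2⟩ := beta_repl x
  rw [h] at h2
  match L, h2 with
  | [j], _ =>
    simp at h1
    exact ⟨j, h1.symm⟩

lemma part_le_sum {j : ℕ} {L : List ℕ} (h : j ∈ L) : ltil j ≤ (L.map ltil).sum := by
  induction L with
  | nil => simp at h
  | cons i L' ih =>
    simp at h
    rcases h with h | h
    · subst h; simp
    · simp only [List.map_cons, List.sum_cons]
      exact le_add_of_nonneg_of_le (by omega) (ih h)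

@[simp] lemma ltil_two : ltil 2 = 3 := rfl
@[simp] lemma ltil_three : ltil 3 = 4 := rfl
@[simp] lemma ltil_four : ltil 4 = 7 := rfl

lemma beta_two_le {x : ℕ} (h0 : x ≠ 0) (h1 : ∀ j, ltil j ≠ x) : 2 ≤ beta x := by
  have hp := beta_pos h0
  rcases Nat.lt_or_ge (beta x) 2 with h | h
  · have hb1 : beta x = 1 := by omega
    obtain ⟨j, hj⟩ := beta_eq_one_coin hb1
    exact absurd hj.symm (h1 j)
  · exact h

lemma not_coin {v : ℕ} (h4 : v < 7) (h1 : v ≠ 1) (h2 : v ≠ 2) (h3 : v ≠ 3) (hv4 : v ≠ 4) :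
    ∀ j, ltil j ≠ v := by
  intro j h
  by_cases hj : j ≤ 3
  · interval_cases j <;> simp at h <;> omega
  · push_neg at hj
    have : ltil 4 ≤ ltil j := ltil_mono.le_iff_le.mpr (by omega)
    simp at this
    omega

/-- Key auxiliary: if x has a representation with t parts all of index ≤ K,
and ltil K ≤ x, then (assuming greedy optimality below w0) beta (x - ltil K) + 1 ≤ t. -/
lemma c1 (K w0 : ℕ) (hK : 3 ≤ K) (hw0 : ltil (K+1) ≤ w0)
    (HQ : ∀ w', w' < w0 → ∀ k', ltil k' ≤ w' → w' < ltil (k'+1) → beta (w' - ltil k') + 1 ≤ beta w') :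
    ∀ (t : ℕ) (L : List ℕ) (x : ℕ), (L.map ltil).sum = x → L.length = t → (∀ j ∈ L, j ≤ K) →
      ltil K ≤ x → x ≤ w0 → beta (x - ltil K) + 1 ≤ t := by
  intro t
  induction t with
  | zero =>
    intro L x h1 h2 _ h4 _
    rw [List.length_eq_zero_iff] at h2
    subst h2
    simp at h1
    have := ltil_pos K
    omega
  | succ t ih =>
    intro L x h1 h2 h3 h4 h5
    match L, h2 with
    | j :: L', h2 =>
      simp only [List.length_cons, Nat.succ.injEq] at h2
      simp only [List.map_cons, List.sum_cons] at h1
      have hjK : j ≤ K := h3 j (by simp)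
      have hposj := ltil_pos j
      by_cases hjeq : j = K
      · subst hjeq
        have hrep : RepL (x - ltil j) t := ⟨L', by omega, h2⟩
        have := beta_le hrep
        omega
      · have hjlt : j < K := lt_of_le_of_ne hjK hjeq
        by_cases h6 : ltil K ≤ (L'.map ltil).sum
        · have hIH := ih L' (L'.map ltil).sum rfl h2 (fun i hi => h3 i (by simp [hi])) h6
            (le_trans (by omega) h5)
          have heq : x - ltil K = ((L'.map ltil).sum - ltil K) + ltil j := by omega
          have hb := beta_add ((L'.map ltil).sum - ltil K) (ltil j)
          have hcoin := beta_coin j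
          rw [heq]
          omega
        · push_neg at h6
          have hmono : ltil j ≤ ltil (K-1) := ltil_mono.le_iff_le.mpr (by omega)
          have hrec : ltil (K+1) = ltil K + ltil (K-1) := by
            obtain ⟨m, rfl⟩ : ∃ m, K = m + 3 := ⟨K - 3, by omega⟩
            exact ltil_rec (m+2) (by omega)
          have hxlt : x < ltil (K+1) := by omega
          have hQ := HQ x (lt_of_lt_of_le hxlt hw0) K h4 hxlt
          have hbx : beta x ≤ t + 1 := beta_le ⟨j :: L', by simp [h1], by simp [h2]⟩
          omega

/-- Greedy optimality -/
lemma q0 : ∀ w, ∀ k, ltil k ≤ w → w < ltil (k+1) → beta (w - ltil k) + 1 ≤ beta w := by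
  intro w
  induction w using Nat.strong_induction_on with
  | _ w IH =>
    intro k hk1 hk2
    by_cases hw7 : w < 7
    · have hk3 : k < 4 := by
        by_contra h
        push_neg at h
        have h2 : ltil 4 ≤ ltil k := ltil_mono.le_iff_le.mpr h
        simp at h2
        omega
      have hb0 := beta_zero
      interval_cases k
      · have hw : w = 1 := by simp at hk1 hk2; omega
        subst hw
        have h := beta_pos (x := 1) (by omega)
        have e : (1:ℕ) - ltil 0 = 0 := by simp
        rw [e, hb0]
        omega
      · have hw : w = 2 := by simp at hk1 hk2; omega
        subst hw
        have h := beta_pos (x := 2) (by omega)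
        have e : (2:ℕ) - ltil 1 = 0 := by simp
        rw [e, hb0]
        omega
      · have hw : w = 3 := by simp at hk1 hk2; omega
        subst hw
        have h := beta_pos (x := 3) (by omega)
        have e : (3:ℕ) - ltil 2 = 0 := by simp
        rw [e, hb0]
        omega
      · simp at hk1 hk2
        interval_cases w
        · have h := beta_pos (x := 4) (by omega)
          have e : (4:ℕ) - ltil 3 = 0 := by simp
          rw [e, hb0]
          omega
        · have h5 : 2 ≤ beta 5 := beta_two_le (by omega) (not_coin (by omega) (by omega) (by omega) (by omega) (by omega))
          have h1 : beta 1 ≤ 1 := by simpa using beta_coin 0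
          have e : (5:ℕ) - ltil 3 = 1 := by simp
          rw [e]
          omega
        · have h6 : 2 ≤ beta 6 := beta_two_le (by omega) (not_coin (by omega) (by omega) (by omega) (by omega) (by omega))
          have h1 : beta 2 ≤ 1 := by simpa using beta_coin 1
          have e : (6:ℕ) - ltil 3 = 2 := by simp
          rw [e]
          omega
    · push_neg at hw7
      have hk4 : 4 ≤ k := by
        by_contra h
        push_neg at h
        have h2 : ltil (k+1) ≤ ltil 4 := ltil_mono.le_iff_le.mpr (by omega)
        simp at h2
        omega
      obtain ⟨m, rfl⟩ : ∃ m, k = m + 4 := ⟨k - 4, by omega⟩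
      obtain ⟨L, hLsum, hLlen⟩ := beta_repl w
      have hparts : ∀ j ∈ L, j ≤ m + 4 := by
        intro j hj
        have h1 := part_le_sum (L := L) hj
        rw [hLsum] at h1
        have h2 : ltil j < ltil (m+4+1) := lt_of_le_of_lt h1 hk2
        have := ltil_mono.lt_iff_lt.mp h2
        omega
      have hrec1 : ltil (m+4) = ltil (m+3) + ltil (m+2) := ltil_rec (m+2) (by omega)
      have hrec2 : ltil (m+5) = ltil (m+4) + ltil (m+3) := ltil_rec (m+3) (by omega)
      have hk2' : w < ltil (m+5) := hk2
      by_cases hmem : (m+4) ∈ L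
      · obtain ⟨s1, s2, rfl⟩ := List.append_of_mem hmem
        have hsum : (s1.map ltil).sum + (ltil (m+4) + (s2.map ltil).sum) = w := by
          simpa using hLsum
        have hlen : s1.length + (s2.length + 1) = beta w := by
          simpa using hLlen
        have hrep : RepL (w - ltil (m+4)) (beta w - 1) := by
          refine ⟨s1 ++ s2, ?_, ?_⟩
          · simp only [List.map_append, List.sum_append]
            omega
          · simp only [List.length_append]
            omega
        have := beta_le hrep
        omega
      · have hparts' : ∀ j ∈ L, j ≤ m + 3 := by
          intro j hj
          have := hparts j hj
          have : j ≠ m + 4 := fun h => hmem (h ▸ hj)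
          omega
        have hml : ltil (m+3) ≤ w := le_trans (ltil_mono.le_iff_le.mpr (by omega)) hk1
        have hc := c1 (m+3) w (by omega) hk1 IH (beta w) L w hLsum hLlen hparts' hml (le_refl w)
        set v := w - ltil (m+3) with hvdef
        have hposm3 := ltil_pos (m+3)
        have hposm2 := ltil_pos (m+2)
        have hv1 : ltil (m+2) ≤ v := by omega
        have hv2 : v < ltil (m+4) := by omega
        have hv3 : v < w := by omega
        by_cases hcase : v < ltil (m+3)
        · have hq := IH v hv3 (m+2) hv1 hcase
          have heq : w - ltil (m+4) = v - ltil (m+2) := by omega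
          rw [heq]
          omega
        · push_neg at hcase
          have hq := IH v hv3 (m+3) hcase hv2
          obtain ⟨e, he⟩ := ltil_succ_sub (m+2)
          have he' : ltil (m+3) = ltil (m+2) + ltil e := he
          have heq : w - ltil (m+4) = (v - ltil (m+3)) + ltil e := by omega
          have hb := beta_add (v - ltil (m+3)) (ltil e)
          have hcoin := beta_coin e
          rw [heq]
          omega

lemma qwin {w k : ℕ} (h1 : ltil k ≤ w) (h2 : w < ltil (k+2)) :
    beta (w - ltil k) ≤ beta w + 1 := by
  by_cases h : w < ltil (k+1)
  · have := q0 w k h1 h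
    omega
  · push_neg at h
    have hq := q0 w (k+1) h h2
    obtain ⟨e, he⟩ := ltil_succ_sub k
    have heq : w - ltil k = (w - ltil (k+1)) + ltil e := by omega
    have hb := beta_add (w - ltil (k+1)) (ltil e)
    have hcoin := beta_coin e
    rw [heq]
    omega

lemma lucas_fib (b : ℕ) : ∀ m, lucas (b + 2 + m)
    = Nat.fib (m+1) * lucas (b+2) + Nat.fib m * lucas (b+1) := by
  intro m
  induction m using Nat.strong_induction_on with
  | _ m ih =>
    match m with
    | 0 => simp
    | 1 =>
      have h : lucas (b+2+1) = lucas (b+2) + lucas (b+1) := rfl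
      rw [h]
      simp [Nat.fib_two]
    | m+2 =>
      have h1 := ih m (by omega)
      have h2 := ih (m+1) (by omega)
      have hrec : lucas (b+2+(m+2)) = lucas (b+2+(m+1)) + lucas (b+2+m) := by
        show lucas ((b+2+m)+2) = lucas ((b+2+m)+1) + lucas (b+2+m)
        rfl
      rw [hrec, h1, h2,
        show Nat.fib (m+2+1) = Nat.fib (m+1) + Nat.fib (m+1+1) from Nat.fib_add_two,
        show Nat.fib (m+2) = Nat.fib m + Nat.fib (m+1) from Nat.fib_add_two]
      ring

lemma lucas_fib' (a : ℕ) (ha : 2 ≤ a) (m : ℕ) :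
    lucas (a + m) = Nat.fib (m+1) * lucas a + Nat.fib m * lucas (a-1) := by
  obtain ⟨b, rfl⟩ : ∃ b, a = b + 2 := ⟨a - 2, by omega⟩
  have h : b + 2 - 1 = b + 1 := by omega
  rw [h]
  exact lucas_fib b m

section Carry

lemma lucas_prev_lt (a : ℕ) (ha : 2 ≤ a) : lucas (a-1) < lucas a := by
  obtain ⟨b, rfl⟩ : ∃ b, a = b + 2 := ⟨a - 2, by omega⟩
  have h : b + 2 - 1 = b + 1 := by omega
  rw [h]
  show lucas (b+1) < lucas (b+1) + lucas b
  have := lucas_pos b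
  omega

lemma two_la_lt (a : ℕ) (ha : 2 ≤ a) : lucas a + lucas a < ltil (a+2) := by
  have h1 : ltil (a+2) = ltil (a+1) + ltil a := ltil_rec a ha
  have h2 : ltil a < ltil (a+1) := ltil_mono (by omega)
  have h3 : ltil a = lucas a := ltil_of_two_le a ha
  omega

lemma Jlemma (a : ℕ) (ha : 2 ≤ a) : ∀ t u, u < lucas a →
    beta ((u + t * lucas (a-1)) % lucas a) ≤ beta u + t + (u + t * lucas (a-1)) / lucas a := by
  have hla := lucas_pos a
  have hc := lucas_prev_lt a ha
  obtain ⟨jc, hjc⟩ := lucas_ltil (a-1)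
  have hta : ltil a = lucas a := ltil_of_two_le a ha
  have h2a := two_la_lt a ha
  intro t
  induction t with
  | zero =>
    intro u hu
    rw [Nat.zero_mul, Nat.add_zero, Nat.mod_eq_of_lt hu, Nat.div_eq_of_lt hu]
    omega
  | succ t IH =>
    intro u hu
    have hstep : u + (t+1) * lucas (a-1) = (u + lucas (a-1)) + t * lucas (a-1) := by ring
    have hbuc : beta (u + lucas (a-1)) ≤ beta u + 1 := by
      have h1 := beta_add u (lucas (a-1))
      have h2 : beta (lucas (a-1)) ≤ 1 := beta_lucas (a-1)
      omega
    by_cases h : u + lucas (a-1) < lucas a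
    · have hIH := IH (u + lucas (a-1)) h
      rw [hstep]
      omega
    · push_neg at h
      set u' := u + lucas (a-1) - lucas a with hu'def
      have hu' : u' < lucas a := by omega
      have hq : beta u' ≤ beta (u + lucas (a-1)) + 1 := by
        have hw := qwin (w := u + lucas (a-1)) (k := a) (by omega) (by omega)
        rw [hta] at hw
        exact hw
      have hIH := IH u' hu'
      have harith : u + (t+1) * lucas (a-1) = (u' + t * lucas (a-1)) + 1 * lucas a := by
        have h1 : (t+1) * lucas (a-1) = lucas (a-1) + t * lucas (a-1) := by ring
        omega
      rw [harith, Nat.add_mul_mod_self_right, Nat.add_mul_div_right _ _ hla]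
      omega

lemma Fcoin (a : ℕ) (ha : 2 ≤ a) : ∀ u k, u < lucas a →
    beta ((u + ltil k) % lucas a) ≤ beta u + 1 + (u + ltil k) / lucas a := by
  have hla := lucas_pos a
  have hta : ltil a = lucas a := ltil_of_two_le a ha
  have h2a := two_la_lt a ha
  intro u k hu
  rcases lt_trichotomy k a with hk | hk | hk
  · have hlt : ltil k < lucas a := by
      have := ltil_mono hk
      omega
    by_cases h : u + ltil k < lucas a
    · rw [Nat.mod_eq_of_lt h, Nat.div_eq_of_lt h]
      have h1 := beta_add u (ltil k)
      have h2 := beta_coin k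
      omega
    · push_neg at h
      have harith : u + ltil k = (u + ltil k - lucas a) + 1 * lucas a := by omega
      rw [harith, Nat.add_mul_mod_self_right, Nat.add_mul_div_right _ _ hla,
        Nat.mod_eq_of_lt (by omega), Nat.div_eq_of_lt (by omega)]
      have hw := qwin (w := u + ltil k) (k := a) (by omega) (by omega)
      rw [hta] at hw
      have h1 := beta_add u (ltil k)
      have h2 := beta_coin k
      omega
  · subst hk
    rw [hta]
    have harith : u + lucas k = u + 1 * lucas k := by ring
    rw [harith, Nat.add_mul_mod_self_right, Nat.add_mul_div_right _ _ hla,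
      Nat.mod_eq_of_lt hu, Nat.div_eq_of_lt hu]
    omega
  · have hk2 : 2 ≤ k := by omega
    have hlk : ltil k = lucas k := ltil_of_two_le k hk2
    obtain ⟨m, rfl⟩ : ∃ m, k = a + m := ⟨k - a, by omega⟩
    have hfib := lucas_fib' a ha m
    have harith : u + ltil (a+m) = (u + Nat.fib m * lucas (a-1)) + Nat.fib (m+1) * lucas a := by
      rw [hlk, hfib]
      ring
    rw [harith, Nat.add_mul_mod_self_right, Nat.add_mul_div_right _ _ hla]
    have hJ := Jlemma a ha (Nat.fib m) u hu
    have hmono : Nat.fib m ≤ Nat.fib (m+1) := Nat.fib_le_fib_succ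
    omega

lemma mainLemma (a : ℕ) (ha : 2 ≤ a) : ∀ t z, RepL z t → beta (z % lucas a) ≤ t + z / lucas a := by
  have hla := lucas_pos a
  intro t
  induction t with
  | zero =>
    intro z hz
    obtain ⟨L, h1, h2⟩ := hz
    rw [List.length_eq_zero_iff] at h2
    subst h2
    simp at h1
    subst h1
    simp [beta_zero]
  | succ t IH =>
    intro z hz
    obtain ⟨L, h1, h2⟩ := hz
    match L, h2 with
    | j :: L', h2 =>
      simp only [List.length_cons, Nat.succ.injEq] at h2
      simp only [List.map_cons, List.sum_cons] at h1
      set z' := (L'.map ltil).sum with hz'def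
      have hIH := IH z' ⟨L', rfl, h2⟩
      set u := z' % lucas a with hudef
      have hu : u < lucas a := Nat.mod_lt _ hla
      have hdm := Nat.div_add_mod z' (lucas a)
      have hz : z = (u + ltil j) + lucas a * (z' / lucas a) := by omega
      have hmod : z % lucas a = (u + ltil j) % lucas a := by
        rw [hz, Nat.add_mul_mod_self_left]
      have hdiv : z / lucas a = (u + ltil j) / lucas a + z' / lucas a := by
        rw [hz, Nat.add_mul_div_left _ _ hla]
      have hF := Fcoin a ha u j hu
      rw [hmod, hdiv]
      omega

end Carry

lemma sum_shift (a : ℕ) : ∀ L : List ℕ,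
    (L.map (fun j => lucas a + ltil j)).sum = L.length * lucas a + (L.map ltil).sum := by
  intro L
  induction L with
  | nil => simp
  | cons j L' ih =>
    simp only [List.map_cons, List.sum_cons, List.length_cons, ih]
    ring

lemma sum_shift_mem (a : ℕ) : ∀ L : List ℕ,
    (L.map (fun j => lucas a + ltil j)).sum ∈ Sset a := by
  intro L
  induction L with
  | nil => exact (Sset a).zero_mem
  | cons j L' ih =>
    simp only [List.map_cons, List.sum_cons]
    refine add_mem (AddSubmonoid.subset_closure ?_) ih
    right
    obtain ⟨n, hn⟩ := ltil_lucas j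
    exact ⟨n, by rw [hn]⟩

lemma Sset_decomp {a : ℕ} {s : ℕ} (hs : s ∈ Sset a) :
    ∃ q t y, s = q * lucas a + y ∧ t ≤ q ∧ RepL y t := by
  refine AddSubmonoid.closure_induction ?_ ?_ ?_ hs
  · rintro z (hz | ⟨n, rfl⟩)
    · refine ⟨1, 0, 0, ?_, by omega, ⟨[], by simp, rfl⟩⟩
      simp at hz
      omega
    · obtain ⟨j, hj⟩ := lucas_ltil n
      exact ⟨1, 1, lucas n, by omega, le_refl 1, ⟨[j], by simp [hj], rfl⟩⟩
  · exact ⟨0, 0, 0, by omega, le_refl 0, ⟨[], by simp, rfl⟩⟩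
  · rintro z w _ _ ⟨q1, t1, y1, h1, h2, L1, h3, h4⟩ ⟨q2, t2, y2, g1, g2, L2, g3, g4⟩
    refine ⟨q1 + q2, t1 + t2, y1 + y2, by rw [h1, g1]; ring, by omega,
      ⟨L1 ++ L2, by simp [h3, g3], by simp [h4, g4]⟩⟩


theorem apery_S (a : ℕ) (ha : 2 ≤ a) (x : ℕ) (hx : x < lucas a) :
    IsLeast {s : ℕ | s ∈ Sset a ∧ s ≡ x [MOD lucas a]} (beta x * lucas a + x) := by
  have hla := lucas_pos a
  constructor
  · constructor
    · obtain ⟨L, hsum, hlen⟩ := beta_repl x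
      have hval := sum_shift a L
      rw [hsum, hlen] at hval
      rw [← hval]
      exact sum_shift_mem a L
    · show (beta x * lucas a + x) % lucas a = x % lucas a
      rw [mul_comm]
      exact Nat.mul_add_mod _ _ _
  · rintro s ⟨hs, hmod⟩
    obtain ⟨q, t, y, rfl, hqt, hrep⟩ := Sset_decomp hs
    have hmain := mainLemma a ha t y hrep
    have hmod' : (q * lucas a + y) % lucas a = x := by
      have h1 : x % lucas a = x := Nat.mod_eq_of_lt hx
      have h2 : (q * lucas a + y) % lucas a = x % lucas a := hmod
      omega
    have hymod : y % lucas a = x := by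
      rw [← hmod', mul_comm, Nat.mul_add_mod]
    rw [hymod] at hmain
    have hdm := Nat.div_add_mod y (lucas a)
    have hb : beta x ≤ q + y / lucas a := by omega
    have h1 : beta x * lucas a ≤ (q + y / lucas a) * lucas a :=
      Nat.mul_le_mul_right _ hb
    have h2 : (q + y / lucas a) * lucas a = q * lucas a + (y / lucas a) * lucas a := by ring
    have h3 : lucas a * (y / lucas a) = (y / lucas a) * lucas a := mul_comm _ _
    omega
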